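/- arXiv:1004.1101 — 3 statements merged into one kernel-verified Lean document; each statement's English description precedes it below -/
import Mathlib

section
/- Let n ≥ 1 and n < p < ∞. There exists a constant C, depending only on n and p, with the following property: for every x₀ ∈ ℝⁿ and R > 0, if u is continuous on the closed ball of center x₀ and radius R, twice continuously differentiable on B(x₀,R), vanishes on the boundary sphere {x : ‖x − x₀‖ = R}, and satisfies Δu = f pointwise on B(x₀,R) with f ∈ L^p(B(x₀,R)), then sup_{B(x₀,R)} |u| ≤ C R^{2 − n/p} ‖f‖_{L^p(B(x₀,R))}. -/
open Finset

lemma quad_pair {n : ℕ} (A : Matrix (Fin n) (Fin n) ℝ)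
    (hneg : ∀ c : Fin n → ℝ, ∑ i, ∑ j, c i * A i j * c j ≤ 0) (i j : Fin n)
    (hij : i ≠ j) (b : ℝ) :
    A i i + b * A i j + b * A j i + b * b * A j j ≤ 0 := by
  have := hneg (Pi.single i 1 + Pi.single j b)
  simp only [Pi.add_apply, Pi.single_apply, add_mul, mul_add, Finset.sum_add_distrib,
    ite_mul, one_mul, zero_mul, mul_ite, mul_zero, mul_one,
    Finset.sum_ite_eq', Finset.mem_univ, if_true] at this
  linarith [this]

lemma la_det_le {n : ℕ} (A : Matrix (Fin n) (Fin n) ℝ)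
    (hsym : ∀ i j, A i j = A j i)
    (hneg : ∀ c : Fin n → ℝ, ∑ i, ∑ j, c i * A i j * c j ≤ 0) :
    |A.det| ≤ (n.factorial : ℝ) * (-Matrix.trace A) ^ n ∧ 0 ≤ -Matrix.trace A := by
  have hdiag : ∀ i, 0 ≤ -A i i := by
    intro i
    have := hneg (Pi.single i 1)
    simp only [Pi.single_apply, ite_mul, one_mul, zero_mul, mul_ite, mul_zero, mul_one,
      Finset.sum_ite_eq', Finset.mem_univ, if_true] at this
    linarith
  set t : ℝ := -Matrix.trace A with ht
  have htr : 0 ≤ t := by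
    rw [ht, Matrix.trace]
    rw [← Finset.sum_neg_distrib]
    exact Finset.sum_nonneg fun i _ => hdiag i
  refine ⟨?_, htr⟩
  have hdiag_le : ∀ i, -A i i ≤ t := by
    intro i
    rw [ht, Matrix.trace, ← Finset.sum_neg_distrib]
    exact Finset.single_le_sum (f := fun j => -A j j) (fun j _ => hdiag j) (Finset.mem_univ i)
  have hentry : ∀ i j, |A i j| ≤ t := by
    intro i j
    rcases eq_or_ne i j with rfl | hij
    · rw [abs_of_nonpos (by linarith [hdiag i])]; exact hdiag_le i
    · have h1 := quad_pair A hneg i j hij 1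
      have h2 := quad_pair A hneg i j hij (-1)
      have hs := hsym i j
      have d1 := hdiag_le i
      have d2 := hdiag_le j
      rw [abs_le]; constructor <;> nlinarith
  rw [Matrix.det_apply]
  calc |∑ σ : Equiv.Perm (Fin n), Equiv.Perm.sign σ • ∏ i, A (σ i) i|
      ≤ ∑ σ : Equiv.Perm (Fin n), |Equiv.Perm.sign σ • ∏ i, A (σ i) i| :=
        Finset.abs_sum_le_sum_abs _ _
    _ ≤ ∑ _σ : Equiv.Perm (Fin n), t ^ n := by
        apply Finset.sum_le_sum
        intro σ _
        rw [Units.smul_def, zsmul_eq_mul, abs_mul]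
        have : |((Equiv.Perm.sign σ : ℤ) : ℝ)| = 1 := by
          rcases Int.units_eq_one_or (Equiv.Perm.sign σ) with h | h <;> simp [h]
        rw [this, one_mul]
        calc |∏ i, A (σ i) i| = ∏ i, |A (σ i) i| := by rw [Finset.abs_prod]
          _ ≤ ∏ _i : Fin n, t := Finset.prod_le_prod (fun i _ => abs_nonneg _)
              (fun i _ => hentry _ _)
          _ = t ^ n := by simp [Finset.prod_const]
    _ = (n.factorial : ℝ) * t ^ n := by
        rw [Finset.sum_const, Finset.card_univ, Fintype.card_perm, Fintype.card_fin,
          nsmul_eq_mul]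


open Filter Set Topology

lemma snd_deriv_nonpos_of_isLocalMax {E : Type*} [NormedAddCommGroup E] [NormedSpace ℝ E]
    {φ : E → ℝ} {x : E} {D₂ : E →L[ℝ] E →L[ℝ] ℝ}
    (hd : ∀ᶠ y in 𝓝 x, DifferentiableAt ℝ φ y)
    (hD : HasFDerivAt (fderiv ℝ φ) D₂ x)
    (hmax : IsLocalMax φ x) (v : E) : D₂ v v ≤ 0 := by
  by_contra hc
  push_neg at hc
  have h0 : fderiv ℝ φ x = 0 := hmax.fderiv_eq_zero
  set ι : ℝ → E := fun t => x + t • v with hι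
  have hι0 : ι 0 = x := by simp [hι]
  have hιt : ∀ t : ℝ, HasDerivAt ι v t := by
    intro t
    simpa [hι] using ((hasDerivAt_id t).smul_const v).const_add x
  have hcont : Continuous ι := by
    apply continuous_const.add (continuous_id.smul continuous_const)
  set q : ℝ → ℝ := fun t => fderiv ℝ φ (ι t) v with hq
  -- q has derivative D₂ v v at 0
  have hq0 : HasDerivAt q (D₂ v v) 0 := by
    have hD' : HasFDerivAt (fderiv ℝ φ) D₂ (ι 0) := by rw [hι0]; exact hD
    have h1 : HasDerivAt (fun t => fderiv ℝ φ (ι t)) (D₂ v) 0 :=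
      hD'.comp_hasDerivAt 0 (hιt 0)
    have := (ContinuousLinearMap.apply ℝ ℝ v).hasFDerivAt.comp_hasDerivAt (0:ℝ) h1
    exact this
  have hq00 : q 0 = 0 := by simp [hq, hι0, h0]
  -- slope positivity
  have hslope : ∀ᶠ t in 𝓝[≠] (0:ℝ), 0 < slope q 0 t := by
    have := hasDerivAt_iff_tendsto_slope.1 hq0
    exact this.eventually (eventually_gt_nhds hc)
  have hslope' : ∀ᶠ t in 𝓝 (0:ℝ), t ≠ 0 → 0 < slope q 0 t := by
    rw [eventually_nhdsWithin_iff] at hslope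
    filter_upwards [hslope] with t ht htne
    exact ht htne
  have hdiff : ∀ᶠ t in 𝓝 (0:ℝ), DifferentiableAt ℝ φ (ι t) := by
    have := hcont.tendsto 0
    rw [hι0] at this
    exact this.eventually hd
  have hmax' : ∀ᶠ t in 𝓝 (0:ℝ), φ (ι t) ≤ φ x := by
    have := hcont.tendsto 0
    rw [hι0] at this
    exact this.eventually hmax
  obtain ⟨ε, hε, hall⟩ := Metric.eventually_nhds_iff_ball.1 ((hdiff.and hmax').and hslope')
  -- ψ := φ ∘ ι is strictly monotone on [0, ε/2]
  have hψt : ∀ t ∈ Metric.ball (0:ℝ) ε, HasDerivAt (fun s => φ (ι s)) (q t) t := by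
    intro t ht
    exact ((hall t ht).1.1.hasFDerivAt).comp_hasDerivAt t (hιt t)
  have hmono : StrictMonoOn (fun s => φ (ι s)) (Set.Icc 0 (ε/2)) := by
    apply strictMonoOn_of_deriv_pos (convex_Icc _ _)
    · intro t ht
      have htb : t ∈ Metric.ball (0:ℝ) ε := by
        simp only [Metric.mem_ball, Real.dist_eq, sub_zero]
        rw [abs_of_nonneg ht.1]
        linarith [ht.2]
      exact (hψt t htb).continuousAt.continuousWithinAt
    · intro t ht
      rw [interior_Icc] at ht
      have htb : t ∈ Metric.ball (0:ℝ) ε := by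
        simp only [Metric.mem_ball, Real.dist_eq, sub_zero]
        rw [abs_of_nonneg ht.1.le]
        linarith [ht.2]
      rw [(hψt t htb).deriv]
      have hs := (hall t htb).2 (ne_of_gt ht.1)
      rw [slope_def_field, hq00] at hs
      rw [sub_zero, sub_zero] at hs
      have := mul_pos hs ht.1
      rwa [div_mul_cancel₀ _ (ne_of_gt ht.1)] at this
  have h1 : φ (ι 0) < φ (ι (ε/2)) :=
    hmono (Set.left_mem_Icc.2 (by linarith)) (Set.right_mem_Icc.2 (by linarith)) (by linarith)
  have h2 : φ (ι (ε/2)) ≤ φ x := by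
    refine (hall (ε/2) ?_).1.2
    simp only [Metric.mem_ball, Real.dist_eq, sub_zero]
    rw [abs_of_nonneg (by linarith : (0:ℝ) ≤ ε/2)]
    linarith
  rw [hι0] at h1
  exact absurd (h1.trans_le h2) (lt_irrefl _)


open MeasureTheory Metric Set Topology Filter
open scoped ENNReal NNReal

/-- The Laplacian of a function on Euclidean space, as the sum of second
partial derivatives in the coordinate directions. -/
noncomputable def lap {n : ℕ} (u : EuclideanSpace ℝ (Fin n) → ℝ)
    (x : EuclideanSpace ℝ (Fin n)) : ℝ :=
  ∑ i, fderiv ℝ (fun y => fderiv ℝ u y (EuclideanSpace.single i 1)) x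
    (EuclideanSpace.single i 1)

variable {n : ℕ}

local notation "E" => EuclideanSpace ℝ (Fin n)

noncomputable def ee (i : Fin n) : EuclideanSpace ℝ (Fin n) := EuclideanSpace.single i 1

/-- Hessian-entry matrix. -/
noncomputable def hess (u : EuclideanSpace ℝ (Fin n) → ℝ) (x : EuclideanSpace ℝ (Fin n)) :
    Matrix (Fin n) (Fin n) ℝ :=
  fun i j => fderiv ℝ (fun y => fderiv ℝ u y (ee i)) x (ee j)

/-- The evaluation CLM from `E →L[ℝ] ℝ` to `E`. -/
noncomputable def evalCLM : ((EuclideanSpace ℝ (Fin n)) →L[ℝ] ℝ) →L[ℝ] EuclideanSpace ℝ (Fin n) :=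
  (PiLp.continuousLinearEquiv 2 ℝ (fun _ : Fin n => ℝ)).symm.toContinuousLinearMap.comp
    (ContinuousLinearMap.pi (fun i => ContinuousLinearMap.apply ℝ ℝ (ee i)))

/-- The gradient-coordinates map. -/
noncomputable def gradMap (u : EuclideanSpace ℝ (Fin n) → ℝ) (x : EuclideanSpace ℝ (Fin n)) :
    EuclideanSpace ℝ (Fin n) :=
  (evalCLM (n := n)) (fderiv ℝ u x)

lemma gradMap_apply (u : EuclideanSpace ℝ (Fin n) → ℝ) (x : EuclideanSpace ℝ (Fin n)) (i : Fin n) :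
    gradMap u x i = fderiv ℝ u x (ee i) := rfl

lemma hess_measurable (u : EuclideanSpace ℝ (Fin n) → ℝ) (i j : Fin n) :
    Measurable (fun x => hess u x i j) :=
  measurable_fderiv_apply_const ℝ _ _

lemma lap_eq_trace (u : EuclideanSpace ℝ (Fin n) → ℝ) (x : EuclideanSpace ℝ (Fin n)) :
    lap u x = Matrix.trace (hess u x) := rfl


section facts
variable {u : EuclideanSpace ℝ (Fin n) → ℝ} {x₀ x : EuclideanSpace ℝ (Fin n)} {R : ℝ}

lemma hD2 (hu2 : ContDiffOn ℝ 2 u (ball x₀ R)) (hx : x ∈ ball x₀ R) :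
    HasFDerivAt (fderiv ℝ u) (fderiv ℝ (fderiv ℝ u) x) x := by
  have h1 : ContDiffAt ℝ 2 u x := hu2.contDiffAt (isOpen_ball.mem_nhds hx)
  have h2 : ContDiffAt ℝ 1 (fderiv ℝ u) x := h1.fderiv_right (by norm_num)
  exact (h2.differentiableAt one_ne_zero).hasFDerivAt

lemma hess_eq (hu2 : ContDiffOn ℝ 2 u (ball x₀ R)) (hx : x ∈ ball x₀ R) (i j : Fin n) :
    hess u x i j = fderiv ℝ (fderiv ℝ u) x (ee j) (ee i) := by
  have h := ((ContinuousLinearMap.apply ℝ ℝ (ee i)).hasFDerivAt).comp x (hD2 hu2 hx)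
  have : fderiv ℝ (fun y => fderiv ℝ u y (ee i)) x
      = (ContinuousLinearMap.apply ℝ ℝ (ee i)).comp (fderiv ℝ (fderiv ℝ u) x) := h.fderiv
  simp only [hess, this, ContinuousLinearMap.coe_comp', Function.comp_apply,
    ContinuousLinearMap.apply_apply]

lemma gradMap_hasFDerivAt (hu2 : ContDiffOn ℝ 2 u (ball x₀ R)) (hx : x ∈ ball x₀ R) :
    HasFDerivAt (gradMap u)
      ((evalCLM (n := n)).comp (fderiv ℝ (fderiv ℝ u) x)) x :=
  (evalCLM (n := n)).hasFDerivAt.comp x (hD2 hu2 hx)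

lemma det_eq (hu2 : ContDiffOn ℝ 2 u (ball x₀ R)) (hx : x ∈ ball x₀ R) :
    ((evalCLM (n := n)).comp (fderiv ℝ (fderiv ℝ u) x)).det = (hess u x).det := by
  set b := (EuclideanSpace.basisFun (Fin n) ℝ).toBasis
  have hmat : LinearMap.toMatrix b b
      (((evalCLM (n := n)).comp (fderiv ℝ (fderiv ℝ u) x)) : EuclideanSpace ℝ (Fin n) →ₗ[ℝ] EuclideanSpace ℝ (Fin n)) = hess u x := by
    ext i j
    rw [LinearMap.toMatrix_apply, hess_eq hu2 hx]
    simp [b, evalCLM, EuclideanSpace.basisFun_apply, ee,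
      OrthonormalBasis.coe_toBasis_repr_apply, EuclideanSpace.basisFun_repr,
      LinearMap.pi_apply, ContinuousLinearMap.apply_apply]
  rw [ContinuousLinearMap.det, ← LinearMap.det_toMatrix b, hmat]

lemma quadform_eq (hu2 : ContDiffOn ℝ 2 u (ball x₀ R)) (hx : x ∈ ball x₀ R) (c : Fin n → ℝ) :
    ∑ i, ∑ j, c i * hess u x i j * c j
      = fderiv ℝ (fderiv ℝ u) x (∑ k, c k • ee k) (∑ k, c k • ee k) := by
  have h : ∀ i j, hess u x i j = fderiv ℝ (fderiv ℝ u) x (ee j) (ee i) := hess_eq hu2 hx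
  simp only [h, map_sum, _root_.map_smul, ContinuousLinearMap.sum_apply,
    ContinuousLinearMap.coe_smul', Pi.smul_apply, ContinuousLinearMap.smul_apply,
    smul_eq_mul, Finset.mul_sum]
  refine Finset.sum_congr rfl fun i _ => Finset.sum_congr rfl fun j _ => ?_
  ring

lemma hess_symm (hu2 : ContDiffOn ℝ 2 u (ball x₀ R)) (hx : x ∈ ball x₀ R) (i j : Fin n) :
    hess u x i j = hess u x j i := by
  have h1 : ContDiffAt ℝ 2 u x := hu2.contDiffAt (isOpen_ball.mem_nhds hx)
  have hsymm := h1.isSymmSndFDerivAt (by simp)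
  rw [hess_eq hu2 hx, hess_eq hu2 hx, hsymm.eq]
end facts

section gamma
variable (u : EuclideanSpace ℝ (Fin n) → ℝ) (x₀ : EuclideanSpace ℝ (Fin n)) (R : ℝ)

/-- The good set: points of the ball where the ABP determinant bound holds. -/
def Gam : Set (EuclideanSpace ℝ (Fin n)) :=
  {x | x ∈ ball x₀ R ∧
    |(hess u x).det| ≤ (n.factorial : ℝ) * (max 0 (-lap u x)) ^ n}

lemma lap_measurable : Measurable (lap u) := by
  apply Finset.measurable_sum
  intro i _
  exact measurable_fderiv_apply_const ℝ _ _

lemma det_hess_measurable : Measurable (fun x => (hess u x).det) := by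
  have : (fun x => (hess u x).det)
      = fun x => ∑ σ : Equiv.Perm (Fin n),
          ((Equiv.Perm.sign σ : ℤ) : ℝ) * ∏ i, hess u x (σ i) i := by
    funext x
    rw [Matrix.det_apply]
    refine Finset.sum_congr rfl fun σ _ => ?_
    rw [Units.smul_def, zsmul_eq_mul]
  rw [this]
  apply Finset.measurable_sum
  intro σ _
  exact (Finset.measurable_prod Finset.univ
    (fun i _ => hess_measurable u (σ i) i)).const_mul _

lemma Gam_measurable : MeasurableSet (Gam u x₀ R) := by
  have h1 : Measurable fun x => |(hess u x).det| := (det_hess_measurable u).abs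
  have h2 : Measurable fun x =>
      (n.factorial : ℝ) * (max 0 (-lap u x)) ^ n :=
    ((measurable_const.max (lap_measurable u).neg).pow_const n).const_mul _
  exact measurableSet_ball.inter (measurableSet_le h1 h2)

variable {u x₀ R}

lemma mem_Gam_of (hu2 : ContDiffOn ℝ 2 u (ball x₀ R)) {x : EuclideanSpace ℝ (Fin n)}
    (hx : x ∈ ball x₀ R)
    (hD : ∀ w : EuclideanSpace ℝ (Fin n), fderiv ℝ (fderiv ℝ u) x w w ≤ 0) :
    x ∈ Gam u x₀ R := by
  obtain ⟨h1, h2⟩ := la_det_le (hess u x) (hess_symm hu2 hx)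
    (fun c => by rw [quadform_eq hu2 hx]; exact hD _)
  refine ⟨hx, ?_⟩
  rw [lap_eq_trace, max_eq_right h2]
  exact h1
end gamma

section cover
variable {u : EuclideanSpace ℝ (Fin n) → ℝ} {x₀ : EuclideanSpace ℝ (Fin n)} {R : ℝ}

lemma cover_lemma (hR : 0 < R)
    (hcont : ContinuousOn u (closedBall x₀ R))
    (hu2 : ContDiffOn ℝ 2 u (ball x₀ R))
    (hbd : ∀ x : EuclideanSpace ℝ (Fin n), ‖x - x₀‖ = R → u x = 0)
    {xm : EuclideanSpace ℝ (Fin n)} (hxm : xm ∈ closedBall x₀ R)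
    (hmax : IsMaxOn u (closedBall x₀ R) xm) (hMpos : 0 < u xm) :
    ball (0 : EuclideanSpace ℝ (Fin n)) (u xm / (2 * R)) ⊆ gradMap u '' (Gam u x₀ R) := by
  set M := u xm with hM
  intro ξ hξ
  rw [mem_ball_zero_iff] at hξ
  have hξR : ‖ξ‖ * R < M / 2 := by
    have h := mul_lt_mul_of_pos_right hξ hR
    have heq : M / (2 * R) * R = M / 2 := by field_simp
    rwa [heq] at h
  set φ : EuclideanSpace ℝ (Fin n) → ℝ := fun y => u y - (innerSL ℝ ξ) (y - x₀) with hφ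
  have hφy : ∀ y, φ y = u y - (innerSL ℝ ξ) (y - x₀) := fun _ => rfl
  clear_value M φ
  have hφc : ContinuousOn φ (closedBall x₀ R) := by
    rw [hφ]
    apply hcont.sub
    exact ((innerSL ℝ ξ).continuous.comp (continuous_id.sub continuous_const)).continuousOn
  obtain ⟨x₁, hx₁mem, hx₁max⟩ := (isCompact_closedBall x₀ R).exists_isMaxOn
    ⟨x₀, mem_closedBall_self hR.le⟩ hφc
  have hinner_bound : ∀ y ∈ closedBall x₀ R, |(innerSL ℝ ξ) (y - x₀)| ≤ ‖ξ‖ * R := by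
    intro y hy
    calc |(innerSL ℝ ξ) (y - x₀)| = |inner ℝ ξ (y - x₀)| := rfl
      _ ≤ ‖ξ‖ * ‖y - x₀‖ := abs_real_inner_le_norm _ _
      _ ≤ ‖ξ‖ * R := by
          apply mul_le_mul_of_nonneg_left _ (norm_nonneg _)
          rw [← dist_eq_norm]
          exact mem_closedBall.1 hy
  have hφlow : M / 2 < φ x₁ := by
    have h1 : φ xm ≤ φ x₁ := hx₁max hxm
    have h2 := hinner_bound xm hxm
    have h3 : φ xm = u xm - (innerSL ℝ ξ) (xm - x₀) := hφy xm
    have h4 := (abs_le.1 h2).2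
    have : M - ‖ξ‖ * R ≤ φ xm := by rw [h3, hM]; linarith
    linarith
  have hx₁ball : x₁ ∈ ball x₀ R := by
    rcases lt_or_eq_of_le (mem_closedBall.1 hx₁mem) with h | h
    · exact mem_ball.2 h
    · exfalso
      have hnorm : ‖x₁ - x₀‖ = R := by rw [← dist_eq_norm]; exact h
      have hu0 : u x₁ = 0 := hbd x₁ hnorm
      have h3 : φ x₁ = u x₁ - (innerSL ℝ ξ) (x₁ - x₀) := hφy x₁
      have h4 := (abs_le.1 (hinner_bound x₁ hx₁mem)).1
      have : φ x₁ ≤ ‖ξ‖ * R := by rw [h3, hu0]; linarith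
      linarith
  -- differentiability facts
  have hud : ∀ y ∈ ball x₀ R, DifferentiableAt ℝ u y := fun y hy =>
    (hu2.contDiffAt (isOpen_ball.mem_nhds hy)).differentiableAt two_ne_zero
  have hinner' : ∀ y : EuclideanSpace ℝ (Fin n),
      HasFDerivAt (fun z => (innerSL ℝ ξ) (z - x₀)) (innerSL ℝ ξ) y := by
    intro y
    have := (innerSL ℝ ξ).hasFDerivAt.comp y ((hasFDerivAt_id y).sub_const x₀)
    exact this
  have hφd : ∀ y ∈ ball x₀ R, DifferentiableAt ℝ φ y := fun y hy => by
    rw [hφ]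
    exact (hud y hy).sub (hinner' y).differentiableAt
  have hφ_fd : ∀ y ∈ ball x₀ R, fderiv ℝ φ y = fderiv ℝ u y - innerSL ℝ ξ := fun y hy => by
    rw [hφ]
    exact ((hud y hy).hasFDerivAt.sub (hinner' y)).fderiv
  have hloc : IsLocalMax φ x₁ := hx₁max.isLocalMax
    (Filter.mem_of_superset (isOpen_ball.mem_nhds hx₁ball) ball_subset_closedBall)
  -- first order
  have h0 : fderiv ℝ φ x₁ = 0 := hloc.fderiv_eq_zero
  have hgrad : fderiv ℝ u x₁ = innerSL ℝ ξ := by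
    have := hφ_fd x₁ hx₁ball
    rw [h0] at this
    exact (sub_eq_zero.1 this.symm)
  have hgm : gradMap u x₁ = ξ := by
    ext i
    rw [gradMap_apply, hgrad]
    simp [ee, EuclideanSpace.inner_single_right]
  -- second order
  have hDφ : HasFDerivAt (fderiv ℝ φ) (fderiv ℝ (fderiv ℝ u) x₁) x₁ := by
    have h1 : HasFDerivAt (fun y => fderiv ℝ u y - innerSL ℝ ξ)
        (fderiv ℝ (fderiv ℝ u) x₁) x₁ := (hD2 hu2 hx₁ball).sub_const _
    apply h1.congr_of_eventuallyEq
    exact Filter.eventually_of_mem (isOpen_ball.mem_nhds hx₁ball) hφ_fd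
  have hφdev : ∀ᶠ y in 𝓝 x₁, DifferentiableAt ℝ φ y :=
    Filter.eventually_of_mem (isOpen_ball.mem_nhds hx₁ball) hφd
  have hsnd : ∀ w : EuclideanSpace ℝ (Fin n), fderiv ℝ (fderiv ℝ u) x₁ w w ≤ 0 :=
    fun w => snd_deriv_nonpos_of_isLocalMax hφdev hDφ hloc w
  exact ⟨x₁, mem_Gam_of hu2 hx₁ball hsnd, hgm⟩
end cover


lemma alg {nr p κr F M R I : ℝ} (hn : 1 ≤ nr) (hp : nr < p) (hκ : 0 < κr) (hF : 1 ≤ F)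
    (hR : 0 < R) (hM : 0 < M) (hI : 0 ≤ I)
    (h : (M / (2 * R)) ^ nr * κr ≤ F * I ^ (nr / p) * (R ^ nr * κr) ^ (1 - nr / p)) :
    M ≤ (2 * F ^ (1 / nr) * κr ^ (-(1 / p))) * R ^ (2 - nr / p) * I ^ (1 / p) := by
  have hnr0 : 0 < nr := lt_of_lt_of_le one_pos hn
  have hp0 : 0 < p := lt_trans hnr0 hp
  have hF0 : 0 < F := lt_of_lt_of_le one_pos hF
  have hr : 0 < M / (2 * R) := by positivity
  have hI0 : 0 < I := by
    rcases lt_or_eq_of_le hI with h' | h'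
    · exact h'
    · exfalso
      rw [← h', Real.zero_rpow (by positivity : nr / p ≠ 0)] at h
      have hpos := Real.rpow_pos_of_pos hr nr
      nlinarith
  set r := M / (2 * R) with hrdef
  have hK : r ^ nr ≤ F * I ^ (nr / p) * (R ^ nr * κr) ^ (1 - nr / p) / κr := by
    rw [le_div_iff₀ hκ]; exact h
  have hbase : 0 < F * I ^ (nr / p) * (R ^ nr * κr) ^ (1 - nr / p) / κr := by positivity
  have h2 : r ≤ (F * I ^ (nr / p) * (R ^ nr * κr) ^ (1 - nr / p) / κr) ^ (1 / nr) := by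
    calc r = (r ^ nr) ^ (1 / nr) := by
          rw [← Real.rpow_mul hr.le, mul_one_div, div_self (ne_of_gt hnr0), Real.rpow_one]
      _ ≤ _ := Real.rpow_le_rpow (Real.rpow_nonneg hr.le _) hK (by positivity)
  have E1 : (F * I ^ (nr / p) * (R ^ nr * κr) ^ (1 - nr / p) / κr) ^ (1 / nr)
      = F ^ (1 / nr) * I ^ (1 / p) * R ^ (1 - nr / p) * κr ^ (-(1 / p)) := by
    have hL : 0 < (F * I ^ (nr / p) * (R ^ nr * κr) ^ (1 - nr / p) / κr) ^ (1 / nr) := by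
      positivity
    have hRp : 0 < F ^ (1 / nr) * I ^ (1 / p) * R ^ (1 - nr / p) * κr ^ (-(1 / p)) := by
      positivity
    apply Real.log_injOn_pos (Set.mem_Ioi.2 hL) (Set.mem_Ioi.2 hRp)
    rw [Real.log_rpow hbase]
    rw [Real.log_div (by positivity) (ne_of_gt hκ)]
    rw [Real.log_mul (by positivity) (by positivity)]
    rw [Real.log_mul (ne_of_gt hF0) (by positivity)]
    rw [Real.log_rpow hI0]
    rw [Real.log_rpow (by positivity : (0:ℝ) < R ^ nr * κr)]
    rw [Real.log_mul (by positivity) (ne_of_gt hκ)]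
    rw [Real.log_rpow hR]
    rw [Real.log_mul (by positivity) (by positivity)]
    rw [Real.log_mul (by positivity) (by positivity)]
    rw [Real.log_mul (by positivity) (by positivity)]
    rw [Real.log_rpow hF0, Real.log_rpow hI0, Real.log_rpow hR, Real.log_rpow hκ]
    field_simp
    ring
  have E2 : R ^ (2 - nr / p) = R * R ^ (1 - nr / p) := by
    have hexp : (2 - nr / p) = 1 + (1 - nr / p) := by ring
    rw [hexp, Real.rpow_add hR, Real.rpow_one]
  have hMr : M = 2 * R * r := by
    rw [hrdef]; field_simp
  calc M = 2 * R * r := hMr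
    _ ≤ 2 * R * (F ^ (1 / nr) * I ^ (1 / p) * R ^ (1 - nr / p) * κr ^ (-(1 / p))) := by
        rw [← E1]
        exact mul_le_mul_of_nonneg_left h2 (by positivity)
    _ = (2 * F ^ (1 / nr) * κr ^ (-(1 / p))) * R ^ (2 - nr / p) * I ^ (1 / p) := by
        rw [E2]; ring

section main

lemma abp_main {n : ℕ} (hn : 1 ≤ n) {p : ℝ} (hp : (n : ℝ) < p) :
    ∃ C : ℝ, 0 < C ∧ ∀ (x₀ : EuclideanSpace ℝ (Fin n)) (R : ℝ), 0 < R →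
      ∀ (u f : EuclideanSpace ℝ (Fin n) → ℝ),
      ContinuousOn u (closedBall x₀ R) →
      ContDiffOn ℝ 2 u (ball x₀ R) →
      (∀ x : EuclideanSpace ℝ (Fin n), ‖x - x₀‖ = R → u x = 0) →
      (∀ x ∈ ball x₀ R, lap u x = f x) →
      IntegrableOn (fun x => |f x| ^ p) (ball x₀ R) →
      ∀ x ∈ ball x₀ R,
        u x ≤ C * R ^ (2 - (n : ℝ) / p) * (∫ z in ball x₀ R, |f z| ^ p) ^ (1 / p) := by
  have hn0 : (0:ℝ) < (n:ℝ) := by exact_mod_cast Nat.lt_of_lt_of_le Nat.zero_lt_one hn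
  have hp0 : (0:ℝ) < p := lt_trans hn0 hp
  have hnne : (n:ℝ) ≠ 0 := ne_of_gt hn0
  haveI : Nontrivial (EuclideanSpace ℝ (Fin n)) := by
    refine nontrivial_of_ne (EuclideanSpace.single (⟨0, hn⟩ : Fin n) (1:ℝ)) 0 ?_
    intro hcl
    have := congrArg (fun v : EuclideanSpace ℝ (Fin n) => v (⟨0, hn⟩ : Fin n)) hcl
    simp [EuclideanSpace.single_apply] at this
  set κ : ℝ≥0∞ := volume (ball (0 : EuclideanSpace ℝ (Fin n)) 1) with hκdef
  have hκ_pos : 0 < κ := measure_ball_pos _ _ one_pos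
  have hκ_lt : κ < ⊤ := measure_ball_lt_top
  have hκr : 0 < κ.toReal := ENNReal.toReal_pos (ne_of_gt hκ_pos) hκ_lt.ne
  have hF1 : (1:ℝ) ≤ (n.factorial : ℝ) := by exact_mod_cast n.factorial_pos
  refine ⟨2 * ((n.factorial : ℝ)) ^ (1/(n:ℝ)) * κ.toReal ^ (-(1/p)), by positivity, ?_⟩
  intro x₀ R hR u f hcont hu2 hbd hlap hint x hx
  have hI0 : (0:ℝ) ≤ ∫ z in ball x₀ R, |f z| ^ p :=
    integral_nonneg (fun z => Real.rpow_nonneg (abs_nonneg _) _)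
  obtain ⟨xm, hxm, hmax⟩ := (isCompact_closedBall x₀ R).exists_isMaxOn
    ⟨x₀, mem_closedBall_self hR.le⟩ hcont
  have hux : u x ≤ u xm := hmax (ball_subset_closedBall hx)
  rcases le_or_gt (u xm) 0 with hM | hM
  · have : (0:ℝ) ≤ 2 * ((n.factorial : ℝ)) ^ (1/(n:ℝ)) * κ.toReal ^ (-(1/p)) *
        R ^ (2 - (n : ℝ) / p) * (∫ z in ball x₀ R, |f z| ^ p) ^ (1 / p) := by positivity
    linarith
  -- Main case : positive max
  have hr : 0 < u xm / (2 * R) := by positivity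
  -- the measurable majorant
  set D : EuclideanSpace ℝ (Fin n) → ℝ≥0∞ := fun y => ENNReal.ofReal |lap u y| with hDdef
  have hD_meas : Measurable D := (lap_measurable u).abs.ennreal_ofReal
  -- Step 1 : measure of small ball vs lintegral over Gam
  have step1 : volume (ball (0 : EuclideanSpace ℝ (Fin n)) (u xm / (2*R)))
      ≤ ∫⁻ y in ball x₀ R, ENNReal.ofReal ((n.factorial : ℝ)) * D y ^ (n:ℝ) := by
    calc volume (ball (0 : EuclideanSpace ℝ (Fin n)) (u xm / (2*R)))
        ≤ volume (gradMap u '' (Gam u x₀ R)) :=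
          measure_mono (cover_lemma hR hcont hu2 hbd hxm hmax hM)
      _ ≤ ∫⁻ y in Gam u x₀ R,
            ENNReal.ofReal |((evalCLM (n := n)).comp (fderiv ℝ (fderiv ℝ u) y)).det| :=
          addHaar_image_le_lintegral_abs_det_fderiv volume (Gam_measurable u x₀ R)
            (fun y hy => (gradMap_hasFDerivAt hu2 hy.1).hasFDerivWithinAt)
      _ ≤ ∫⁻ y in Gam u x₀ R, ENNReal.ofReal ((n.factorial : ℝ)) * D y ^ (n:ℝ) := by
          apply setLIntegral_mono (by fun_prop)
          intro y hy
          rw [det_eq hu2 hy.1]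
          have h1 : |(hess u y).det| ≤ (n.factorial : ℝ) * (max 0 (-lap u y)) ^ n := hy.2
          have h2 : (max 0 (-lap u y)) ^ n ≤ |lap u y| ^ n := by
            apply pow_le_pow_left₀ (le_max_left _ _)
            rw [max_le_iff]
            exact ⟨abs_nonneg _, neg_le_abs _⟩
          have h3 : |(hess u y).det| ≤ (n.factorial : ℝ) * |lap u y| ^ n := by nlinarith
          calc ENNReal.ofReal |(hess u y).det|
              ≤ ENNReal.ofReal ((n.factorial : ℝ) * |lap u y| ^ n) := ENNReal.ofReal_le_ofReal h3
            _ = ENNReal.ofReal ((n.factorial : ℝ)) * D y ^ (n:ℝ) := by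
                rw [ENNReal.ofReal_mul (by positivity)]
                congr 1
                simp only [hDdef]
                rw [ENNReal.rpow_natCast, ENNReal.ofReal_pow (abs_nonneg _)]
      _ ≤ ∫⁻ y in ball x₀ R, ENNReal.ofReal ((n.factorial : ℝ)) * D y ^ (n:ℝ) :=
          lintegral_mono_set (fun y hy => hy.1)
  -- Step 2 : Hölder
  have hP1 : 1 < p / (n:ℝ) := (one_lt_div hn0).2 hp
  have hPQ := Real.HolderConjugate.conjExponent hP1
  have step2 : ∫⁻ y in ball x₀ R, D y ^ (n:ℝ)
      ≤ (∫⁻ y in ball x₀ R, D y ^ p) ^ ((n:ℝ)/p) * (volume (ball x₀ R)) ^ (1 - (n:ℝ)/p) := by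
    have hHold := ENNReal.lintegral_mul_le_Lp_mul_Lq (volume.restrict (ball x₀ R)) hPQ
      (hD_meas.pow_const ((n:ℝ))).aemeasurable aemeasurable_const
      (f := fun y => D y ^ (n:ℝ)) (g := fun _ => 1)
    have e2 : ∀ y : EuclideanSpace ℝ (Fin n), (D y ^ (n:ℝ)) ^ (p/(n:ℝ)) = D y ^ p := fun y => by
      rw [← ENNReal.rpow_mul]
      congr 1
      field_simp
    have e3 : (1:ℝ) / (p/(n:ℝ)) = (n:ℝ)/p := one_div_div _ _
    have e4 : (1:ℝ) / (p/(n:ℝ)).conjExponent = 1 - (n:ℝ)/p := by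
      show (1:ℝ) / ((p/(n:ℝ)) / ((p/(n:ℝ)) - 1)) = 1 - (n:ℝ)/p
      rw [one_div_div]
      have hne : p / (n:ℝ) ≠ 0 := by positivity
      field_simp
    simp only [Pi.mul_apply, mul_one, ENNReal.one_rpow] at hHold
    simp only [e2] at hHold
    rw [e3, e4] at hHold
    rwa [setLIntegral_one] at hHold
  -- Step 3 : identify the p-integral
  have step3 : ∫⁻ y in ball x₀ R, D y ^ p
      = ENNReal.ofReal (∫ z in ball x₀ R, |f z| ^ p) := by
    have h1 : ∫⁻ y in ball x₀ R, D y ^ p = ∫⁻ y in ball x₀ R, ENNReal.ofReal (|f y| ^ p) := by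
      apply setLIntegral_congr_fun measurableSet_ball
      intro y hy
      rw [hDdef]
      beta_reduce
      rw [ENNReal.ofReal_rpow_of_nonneg (abs_nonneg _) hp0.le, hlap y hy]
    rw [h1]
    rw [← ofReal_integral_eq_lintegral_ofReal hint
      (ae_of_all _ (fun z => Real.rpow_nonneg (abs_nonneg _) _))]
  -- volumes of balls
  have vol_small : volume (ball (0 : EuclideanSpace ℝ (Fin n)) (u xm / (2*R)))
      = ENNReal.ofReal ((u xm / (2*R)) ^ n) * κ := by
    rw [hκdef, Measure.addHaar_ball volume _ hr.le, finrank_euclideanSpace_fin]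
  have vol_big : volume (ball x₀ R) = ENNReal.ofReal (R ^ n) * κ := by
    rw [hκdef, Measure.addHaar_ball volume _ hR.le, finrank_euclideanSpace_fin]
  -- assemble in ℝ≥0∞
  have hchain : ENNReal.ofReal ((u xm / (2*R)) ^ n) * κ
      ≤ ENNReal.ofReal ((n.factorial : ℝ))
        * (ENNReal.ofReal (∫ z in ball x₀ R, |f z| ^ p)) ^ ((n:ℝ)/p)
        * (ENNReal.ofReal (R ^ n) * κ) ^ (1 - (n:ℝ)/p) := by
    rw [← vol_small, ← vol_big, ← step3]
    calc volume (ball (0 : EuclideanSpace ℝ (Fin n)) (u xm / (2*R)))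
        ≤ ∫⁻ y in ball x₀ R, ENNReal.ofReal ((n.factorial : ℝ)) * D y ^ (n:ℝ) := step1
      _ = ENNReal.ofReal ((n.factorial : ℝ)) * ∫⁻ y in ball x₀ R, D y ^ (n:ℝ) :=
          lintegral_const_mul _ (hD_meas.pow_const _)
      _ ≤ ENNReal.ofReal ((n.factorial : ℝ))
          * ((∫⁻ y in ball x₀ R, D y ^ p) ^ ((n:ℝ)/p) * (volume (ball x₀ R)) ^ (1 - (n:ℝ)/p)) :=
          mul_le_mul_right step2 _
      _ = ENNReal.ofReal ((n.factorial : ℝ)) * (∫⁻ y in ball x₀ R, D y ^ p) ^ ((n:ℝ)/p)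
          * (volume (ball x₀ R)) ^ (1 - (n:ℝ)/p) := by ring
  -- pass to real numbers
  have hnp_nonneg : (0:ℝ) ≤ (n:ℝ)/p := by positivity
  have hnp1_nonneg : (0:ℝ) ≤ 1 - (n:ℝ)/p := by
    rw [sub_nonneg, div_le_one hp0]
    exact hp.le
  have hRHS_ne_top : ENNReal.ofReal ((n.factorial : ℝ))
      * (ENNReal.ofReal (∫ z in ball x₀ R, |f z| ^ p)) ^ ((n:ℝ)/p)
      * (ENNReal.ofReal (R ^ n) * κ) ^ (1 - (n:ℝ)/p) ≠ ⊤ := by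
    apply ENNReal.mul_ne_top
    apply ENNReal.mul_ne_top ENNReal.ofReal_ne_top
    · exact ENNReal.rpow_ne_top_of_nonneg hnp_nonneg ENNReal.ofReal_ne_top
    · exact ENNReal.rpow_ne_top_of_nonneg hnp1_nonneg
        (ENNReal.mul_ne_top ENNReal.ofReal_ne_top hκ_lt.ne)
  have hreal := ENNReal.toReal_mono hRHS_ne_top hchain
  rw [ENNReal.toReal_mul, ENNReal.toReal_mul, ENNReal.toReal_mul,
    ENNReal.toReal_ofReal (by positivity), ENNReal.toReal_ofReal (by positivity),
    ← ENNReal.toReal_rpow, ← ENNReal.toReal_rpow, ENNReal.toReal_ofReal hI0,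
    ENNReal.toReal_mul, ENNReal.toReal_ofReal (by positivity)] at hreal
  -- apply the algebra lemma
  have halg : u xm ≤ (2 * ((n.factorial : ℝ)) ^ (1/(n:ℝ)) * κ.toReal ^ (-(1/p)))
      * R ^ (2 - (n:ℝ)/p) * (∫ z in ball x₀ R, |f z| ^ p) ^ (1/p) := by
    apply alg (by exact_mod_cast hn) hp hκr hF1 hR hM hI0
    rw [Real.rpow_natCast, Real.rpow_natCast]
    exact hreal
  linarith

end main

lemma lap_neg {n : ℕ} (u : EuclideanSpace ℝ (Fin n) → ℝ) (x : EuclideanSpace ℝ (Fin n)) :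
    lap (fun y => -(u y)) x = - lap u x := by
  unfold lap
  rw [← Finset.sum_neg_distrib]
  refine Finset.sum_congr rfl fun i _ => ?_
  have h1 : (fun y => fderiv ℝ (fun z => -(u z)) y (EuclideanSpace.single i 1))
      = fun y => -(fderiv ℝ u y (EuclideanSpace.single i 1)) := by
    funext y
    rw [fderiv_fun_neg]
    simp
  rw [h1, fderiv_fun_neg]
  simp

/-- Euclidean, classical-solution case of estimate (2.3) in the proof of Lemma 2.1:
the sup bound `sup_{B(x₀,R)} |u| ≤ C R^{2-n/p} ‖f‖_{L^p(B(x₀,R))}` for the solution of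
the Dirichlet problem `Δu = f` with zero boundary values, `f ∈ L^p`, `p > n`. -/
theorem dirichlet_sup_bound
    (n : ℕ) (hn : 1 ≤ n) (p : ℝ) (hp : (n : ℝ) < p) :
    ∃ C : ℝ, 0 < C ∧
      ∀ (x₀ : EuclideanSpace ℝ (Fin n)) (R : ℝ), 0 < R →
      ∀ (u f : EuclideanSpace ℝ (Fin n) → ℝ),
      ContinuousOn u (closedBall x₀ R) →
      ContDiffOn ℝ 2 u (ball x₀ R) →
      (∀ x : EuclideanSpace ℝ (Fin n), ‖x - x₀‖ = R → u x = 0) →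
      (∀ x ∈ ball x₀ R, lap u x = f x) →
      IntegrableOn (fun x => |f x| ^ p) (ball x₀ R) →
      ∀ x ∈ ball x₀ R,
        |u x| ≤ C * R ^ (2 - (n : ℝ) / p) *
          (∫ z in ball x₀ R, |f z| ^ p) ^ (1 / p) := by
  obtain ⟨C, hC, hmain⟩ := abp_main hn hp
  refine ⟨C, hC, ?_⟩
  intro x₀ R hR u f hcont hu2 hbd hlap hint x hx
  have h1 := hmain x₀ R hR u f hcont hu2 hbd hlap hint x hx
  have hint' : IntegrableOn (fun z => |(fun y => -(f y)) z| ^ p) (ball x₀ R) := by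
    simpa only [abs_neg] using hint
  have h2 := hmain x₀ R hR (fun y => -(u y)) (fun y => -(f y)) hcont.neg hu2.neg
    (fun z hz => by show -(u z) = 0; rw [hbd z hz, neg_zero])
    (fun z hz => by show lap (fun y => -(u y)) z = -(f z); rw [lap_neg, hlap z hz]) hint' x hx
  simp only [abs_neg] at h2
  rw [abs_le]
  exact ⟨by linarith, h1⟩
end

section
/- Let n ≥ 1. There exist constants C₁, C₂ > 0, depending only on n, such that for all T and r with 0 < T < r³ < 1 and every x ∈ ℝⁿ, ∫₀^T ∫_{{y : r ≤ ‖y − x‖ ≤ 2r}} ‖∇_y p(t,x,y)‖² dy dt ≤ C₁ exp(−C₂ T^{−1/3}), where ‖∇_y p(t,x,y)‖² = (‖x − y‖²/(4t²)) (4πt)^{−n} exp(−‖x − y‖²/(2t)). -/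
open MeasureTheory Metric Set Nat

private lemma aux_pow_mul_exp (k : ℕ) {u : ℝ} (hu : 0 ≤ u) :
    u ^ k * Real.exp (-u) ≤ (k ! : ℝ) := by
  have h := Real.pow_div_factorial_le_exp (x := u) hu k
  have hk : (0:ℝ) < k ! := by positivity
  have h2 : u ^ k ≤ (k ! : ℝ) * Real.exp u := by
    rw [div_le_iff₀ hk] at h
    linarith [h]
  calc u ^ k * Real.exp (-u) ≤ ((k ! : ℝ) * Real.exp u) * Real.exp (-u) := by
        exact mul_le_mul_of_nonneg_right h2 (Real.exp_nonneg _)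
    _ = (k ! : ℝ) := by rw [mul_assoc, ← Real.exp_add, add_neg_cancel, Real.exp_zero, mul_one]

private lemma aux_poly_absorb (k : ℕ) {s : ℝ} (hs : 0 ≤ s) :
    s ^ k * Real.exp (-(s / 4)) ≤ (k ! : ℝ) * 8 ^ k * Real.exp (-(s / 8)) := by
  have h1 : (s / 8) ^ k * Real.exp (-(s / 8)) ≤ (k ! : ℝ) := aux_pow_mul_exp k (by positivity)
  have h2 : Real.exp (-(s / 4)) = Real.exp (-(s / 8)) * Real.exp (-(s / 8)) := by
    rw [← Real.exp_add]; ring_nf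
  have h3 : s ^ k = 8 ^ k * (s / 8) ^ k := by
    rw [div_pow, mul_div_cancel₀]; positivity
  calc s ^ k * Real.exp (-(s / 4))
      = 8 ^ k * ((s / 8) ^ k * Real.exp (-(s / 8))) * Real.exp (-(s / 8)) := by
        rw [h2, h3]; ring
    _ ≤ 8 ^ k * (k ! : ℝ) * Real.exp (-(s / 8)) := by
        gcongr
    _ = (k ! : ℝ) * 8 ^ k * Real.exp (-(s / 8)) := by ring

/-- Euclidean case of Lemma 2.5: for `0 < T < r³ < 1`, the squared gradient of the
Gaussian heat kernel `p(t,x,y) = (4πt)^{-n/2} e^{-‖x-y‖²/(4t)}`, namely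
`‖∇_y p(t,x,y)‖² = (‖x-y‖²/(4t²)) (4πt)^{-n} e^{-‖x-y‖²/(2t)}`, integrated over
`t ∈ (0,T)` and over the annulus `r ≤ ‖y - x‖ ≤ 2r`, is bounded by `C₁ e^{-C₂ T^{-1/3}}`. -/
theorem heat_kernel_gradient_annulus_estimate (n : ℕ) (hn : 1 ≤ n) :
    ∃ C₁ : ℝ, 0 < C₁ ∧ ∃ C₂ : ℝ, 0 < C₂ ∧
      ∀ (T r : ℝ), 0 < T → T < r ^ 3 → r ^ 3 < 1 →
      ∀ x : EuclideanSpace ℝ (Fin n),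
        ∫ t in Ioo (0 : ℝ) T,
          ∫ y in {y : EuclideanSpace ℝ (Fin n) | r ≤ ‖y - x‖ ∧ ‖y - x‖ ≤ 2 * r},
            (‖x - y‖ ^ 2 / (4 * t ^ 2)) * (4 * Real.pi * t) ^ (-(n : ℝ)) *
              Real.exp (-‖x - y‖ ^ 2 / (2 * t))
        ≤ C₁ * Real.exp (-C₂ * T ^ (-(1 : ℝ) / 3)) := by
  have hπ : (0:ℝ) < Real.pi := Real.pi_pos
  set E := EuclideanSpace ℝ (Fin n)
  set K : ℝ := 4 ^ (n+1) * ((n+2)! : ℝ) * ((4 * Real.pi) ^ n)⁻¹ with hK_def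
  have hK : 0 < K := by positivity
  set Vn : ℝ := (volume (closedBall (0:E) 2)).toReal with hVn_def
  have hVnfin : volume (closedBall (0:E) 2) < ⊤ := measure_closedBall_lt_top
  have hVn : 0 < Vn := by
    refine ENNReal.toReal_pos ?_ hVnfin.ne
    exact (measure_closedBall_pos volume _ (by norm_num)).ne'
  refine ⟨K * Vn * ((2*(n+1))! : ℝ) * 8 ^ (2*(n+1)), by positivity, 1/8, by norm_num, ?_⟩
  intro T r hT hTr hr1 x
  have hr : 0 < r := by nlinarith [sq_nonneg r, sq_nonneg (r-1), sq_nonneg (r+1)]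
  have hrlt1 : r < 1 := by nlinarith [sq_nonneg r, sq_nonneg (r-1)]
  have hT1 : T ≤ 1 := (hTr.trans hr1).le
  set s : ℝ := T ^ (-(1:ℝ) / 3) with hs_def
  have hs : 0 < s := Real.rpow_pos_of_pos hT _
  -- T^{1/3} < r
  have h13 : T ^ ((1:ℝ)/3) < r := by
    have h := Real.rpow_lt_rpow hT.le hTr (by norm_num : (0:ℝ) < 1/3)
    rwa [← Real.rpow_natCast r 3, ← Real.rpow_mul hr.le, show ((3:ℕ):ℝ) * (1/3) = 1 by norm_num,
      Real.rpow_one] at h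
  have hsinv : s = (T ^ ((1:ℝ)/3))⁻¹ := by
    rw [hs_def, neg_div, Real.rpow_neg hT.le]
  have hs_inv_le : s⁻¹ ≤ r := by
    rw [hsinv, inv_inv]; exact h13.le
  have hs3 : s ^ 3 = T⁻¹ := by
    rw [hs_def, ← Real.rpow_natCast (T ^ (-(1:ℝ)/3)) 3, ← Real.rpow_mul hT.le]
    norm_num
    rw [Real.rpow_neg hT.le, Real.rpow_one]
  -- s/4 ≤ r^2/(4*T)
  have hsT : s / 4 ≤ r ^ 2 / (4 * T) := by
    have h1 : s⁻¹ ^ 2 ≤ r ^ 2 := by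
      have : (0:ℝ) ≤ s⁻¹ := by positivity
      exact pow_le_pow_left₀ this hs_inv_le 2
    have h2 : r ^ 2 / (4 * T) = r ^ 2 * T⁻¹ / 4 := by field_simp
    rw [h2, ← hs3]
    have h3 : s⁻¹ ^ 2 * s ^ 3 = s := by
      field_simp
    calc s / 4 = s⁻¹ ^ 2 * s ^ 3 / 4 := by rw [h3]
      _ ≤ r ^ 2 * s ^ 3 / 4 := by
          have hs3pos : (0:ℝ) ≤ s ^ 3 := by positivity
          gcongr
  -- ((r^2)^(n+1))⁻¹ ≤ s^(2*(n+1))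
  have hrpow : ((r ^ 2) ^ (n+1))⁻¹ ≤ s ^ (2*(n+1)) := by
    have h1 : (s ^ (2*(n+1)))⁻¹ ≤ (r ^ 2) ^ (n+1) := by
      have h2 : (s⁻¹ ^ 2) ^ (n+1) ≤ (r ^ 2) ^ (n+1) := by
        have : (0:ℝ) ≤ s⁻¹ := by positivity
        gcongr
      calc (s ^ (2*(n+1)))⁻¹ = (s⁻¹ ^ 2) ^ (n+1) := by
            rw [← inv_pow, ← pow_mul]
        _ ≤ (r ^ 2) ^ (n+1) := h2
    have hsp : (0:ℝ) < s ^ (2*(n+1)) := by positivity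
    have hrp : (0:ℝ) < (r ^ 2) ^ (n+1) := by positivity
    exact (inv_le_comm₀ hrp hsp).mpr h1
  set M : ℝ := K * s ^ (2*(n+1)) * Real.exp (-(s/4)) with hM_def
  have hM : 0 < M := by positivity
  set A : Set E := {y : E | r ≤ ‖y - x‖ ∧ ‖y - x‖ ≤ 2 * r} with hA_def
  -- pointwise bound
  have hpt : ∀ t ∈ Ioo (0:ℝ) T, ∀ y ∈ A,
      (‖x - y‖ ^ 2 / (4 * t ^ 2)) * (4 * Real.pi * t) ^ (-(n : ℝ)) *
        Real.exp (-‖x - y‖ ^ 2 / (2 * t)) ≤ M := by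
    intro t ht y hy
    obtain ⟨ht0, htT⟩ := ht
    set a : ℝ := ‖x - y‖ with ha_def
    have hra : r ≤ a := by rw [ha_def, norm_sub_rev]; exact hy.1
    have ha : 0 < a := lt_of_lt_of_le hr hra
    set u : ℝ := a ^ 2 / (4 * t) with hu_def
    have hu : 0 < u := by positivity
    have hrpow_eq : (4 * Real.pi * t) ^ (-(n : ℝ)) = ((4 * Real.pi * t) ^ n)⁻¹ := by
      rw [Real.rpow_neg (by positivity), Real.rpow_natCast]
    have hexp : Real.exp (-a ^ 2 / (2 * t)) = Real.exp (-u) * Real.exp (-u) := by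
      rw [← Real.exp_add]
      congr 1
      rw [hu_def]
      field_simp
      ring
    have heq : a ^ 2 / (4 * t ^ 2) * ((4 * Real.pi * t) ^ n)⁻¹ =
        4 ^ (n+1) * ((4 * Real.pi) ^ n)⁻¹ * ((a ^ 2) ^ (n+1))⁻¹ * u ^ (n+2) := by
      rw [hu_def, div_pow, mul_pow (4 * Real.pi) t, mul_pow 4 t]
      have h4t : (4:ℝ) ^ (n+2) * t ^ (n+2) ≠ 0 := by positivity
      field_simp
      ring
    rw [hrpow_eq, hexp, ← mul_assoc, heq]
    have hb1 : u ^ (n+2) * Real.exp (-u) ≤ ((n+2)! : ℝ) := aux_pow_mul_exp (n+2) hu.le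
    have hb2 : Real.exp (-u) ≤ Real.exp (-(s/4)) := by
      rw [Real.exp_le_exp, neg_le_neg_iff]
      refine hsT.trans ?_
      rw [hu_def]
      gcongr
    have hb3 : ((a ^ 2) ^ (n+1))⁻¹ ≤ s ^ (2*(n+1)) := by
      refine le_trans ?_ hrpow
      gcongr
    calc 4 ^ (n+1) * ((4 * Real.pi) ^ n)⁻¹ * ((a ^ 2) ^ (n+1))⁻¹ * u ^ (n+2) *
          Real.exp (-u) * Real.exp (-u)
        = (4 ^ (n+1) * ((4 * Real.pi) ^ n)⁻¹) * ((a ^ 2) ^ (n+1))⁻¹ *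
            (u ^ (n+2) * Real.exp (-u)) * Real.exp (-u) := by ring
      _ ≤ (4 ^ (n+1) * ((4 * Real.pi) ^ n)⁻¹) * (s ^ (2*(n+1))) *
            ((n+2)! : ℝ) * Real.exp (-(s/4)) := by
          gcongr <;> positivity
      _ = M := by rw [hM_def, hK_def]; ring
  -- annulus has finite measure, bounded by Vn
  have hA_sub : A ⊆ closedBall x 2 := by
    intro y hy
    rw [mem_closedBall, dist_eq_norm]
    calc ‖y - x‖ ≤ 2 * r := hy.2
      _ ≤ 2 := by nlinarith
  have hAfin : volume A < ⊤ := (measure_mono hA_sub).trans_lt measure_closedBall_lt_top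
  have hAvol : (volume A).toReal ≤ Vn := by
    rw [hVn_def]
    refine ENNReal.toReal_le_toReal hAfin.ne hVnfin.ne |>.mpr ?_
    calc volume A ≤ volume (closedBall x 2) := measure_mono hA_sub
      _ = volume (closedBall (0:E) 2) := Measure.addHaar_closedBall_center _ _ _
  -- inner integral bound
  have hinner : ∀ t ∈ Ioo (0:ℝ) T,
      (∫ y in A, (‖x - y‖ ^ 2 / (4 * t ^ 2)) * (4 * Real.pi * t) ^ (-(n : ℝ)) *
        Real.exp (-‖x - y‖ ^ 2 / (2 * t))) ≤ M * Vn := by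
    intro t ht
    have hcont : Continuous (fun y : E => (‖x - y‖ ^ 2 / (4 * t ^ 2)) *
        (4 * Real.pi * t) ^ (-(n : ℝ)) * Real.exp (-‖x - y‖ ^ 2 / (2 * t))) := by
      fun_prop
    have h1 : ‖∫ y in A, (‖x - y‖ ^ 2 / (4 * t ^ 2)) * (4 * Real.pi * t) ^ (-(n : ℝ)) *
        Real.exp (-‖x - y‖ ^ 2 / (2 * t))‖ ≤ M * (volume A).toReal := by
      refine norm_setIntegral_le_of_norm_le_const hAfin ?_
      intro y hy
      rw [Real.norm_eq_abs, abs_of_nonneg ?_]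
      · exact hpt t ht y hy
      · have ht0 := ht.1
        positivity
    calc (∫ y in A, (‖x - y‖ ^ 2 / (4 * t ^ 2)) * (4 * Real.pi * t) ^ (-(n : ℝ)) *
          Real.exp (-‖x - y‖ ^ 2 / (2 * t)))
        ≤ ‖∫ y in A, (‖x - y‖ ^ 2 / (4 * t ^ 2)) * (4 * Real.pi * t) ^ (-(n : ℝ)) *
          Real.exp (-‖x - y‖ ^ 2 / (2 * t))‖ := le_abs_self _
      _ ≤ M * (volume A).toReal := h1
      _ ≤ M * Vn := by gcongr
  -- outer integral bound
  have houter : (∫ t in Ioo (0:ℝ) T,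
      ∫ y in A, (‖x - y‖ ^ 2 / (4 * t ^ 2)) * (4 * Real.pi * t) ^ (-(n : ℝ)) *
        Real.exp (-‖x - y‖ ^ 2 / (2 * t))) ≤ T * (M * Vn) := by
    have h0 : (0 : ℝ → ℝ) ≤ᵐ[volume.restrict (Ioo (0:ℝ) T)] fun t =>
        ∫ y in A, (‖x - y‖ ^ 2 / (4 * t ^ 2)) * (4 * Real.pi * t) ^ (-(n : ℝ)) *
          Real.exp (-‖x - y‖ ^ 2 / (2 * t)) := by
      filter_upwards [ae_restrict_mem measurableSet_Ioo] with t ht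
      refine integral_nonneg fun y => ?_
      have ht0 := ht.1
      positivity
    have hgi : Integrable (fun _ : ℝ => M * Vn) (volume.restrict (Ioo (0:ℝ) T)) := by
      refine (integrableOn_const_iff (C := M * Vn)).mpr (Or.inr ?_)
      rw [Real.volume_Ioo]
      exact ENNReal.ofReal_lt_top
    have hle : (fun t => ∫ y in A, (‖x - y‖ ^ 2 / (4 * t ^ 2)) *
        (4 * Real.pi * t) ^ (-(n : ℝ)) * Real.exp (-‖x - y‖ ^ 2 / (2 * t)))
        ≤ᵐ[volume.restrict (Ioo (0:ℝ) T)] fun _ => M * Vn := by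
      filter_upwards [ae_restrict_mem measurableSet_Ioo] with t ht
      exact hinner t ht
    have := integral_mono_of_nonneg h0 hgi hle
    rwa [integral_const, measureReal_restrict_apply_univ, measureReal_def, Real.volume_Ioo, sub_zero,
      ENNReal.toReal_ofReal hT.le, smul_eq_mul] at this
  refine houter.trans ?_
  -- final arithmetic
  have habs : s ^ (2*(n+1)) * Real.exp (-(s/4)) ≤
      ((2*(n+1))! : ℝ) * 8 ^ (2*(n+1)) * Real.exp (-(s/8)) := aux_poly_absorb _ hs.le
  have hfinal : -(1/8 : ℝ) * T ^ (-(1:ℝ)/3) = -(s/8) := by rw [← hs_def]; ring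
  rw [hfinal]
  calc T * (M * Vn) ≤ 1 * (M * Vn) := by gcongr
    _ = K * Vn * (s ^ (2*(n+1)) * Real.exp (-(s/4))) := by rw [hM_def]; ring
    _ ≤ K * Vn * (((2*(n+1))! : ℝ) * 8 ^ (2*(n+1)) * Real.exp (-(s/8))) := by gcongr
    _ = K * Vn * ((2*(n+1))! : ℝ) * 8 ^ (2*(n+1)) * Real.exp (-(s/8)) := by ring
end

section
/- Let n ≥ 1, let Ω ⊆ ℝⁿ be open, let u be locally integrable on Ω, and let M ≥ 0. Suppose that for every ball B(z,ρ) whose doubled ball B(z,2ρ) is contained in Ω one has the Poincaré-type bound ⨍_{B(z,ρ)} | u(x) − ⨍_{B(z,ρ)} u | dx ≤ M ρ, where ⨍ denotes the average over the ball. Then there exist a constant C, depending only on n, and a function v : Ω → ℝ with u = v almost everywhere on Ω, such that |v(x) − v(y)| ≤ C M ‖x − y‖ for all x, y ∈ B(y₀,r) whenever B(y₀,6r) ⊆ Ω. -/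
open MeasureTheory Metric Set Filter Topology

namespace PoincareLip

variable {n : ℕ}

local notation "E" => EuclideanSpace ℝ (Fin n)

lemma kpos : 0 < (volume (ball (0:E) 1)).toReal :=
  ENNReal.toReal_pos (measure_ball_pos volume 0 one_pos).ne' measure_ball_lt_top.ne

lemma vol_ball (z : E) {ρ : ℝ} (hρ : 0 < ρ) :
    (volume (ball z ρ)).toReal = ρ ^ n * (volume (ball (0:E) 1)).toReal := by
  rw [Measure.addHaar_ball_of_pos volume z hρ, finrank_euclideanSpace_fin,
    ENNReal.toReal_mul, ENNReal.toReal_ofReal (by positivity)]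

lemma avg_sub_avg {u : E → ℝ} {M s t : ℝ} {z z' : E}
    (ht : 0 < t) (hts : t ≤ s)
    (hsub : ball z' t ⊆ ball z s)
    (hu : IntegrableOn u (ball z s))
    (hP : ⨍ x in ball z s, |u x - ⨍ y in ball z s, u y| ≤ M * s) :
    |(⨍ y in ball z' t, u y) - ⨍ y in ball z s, u y| ≤ (s / t) ^ n * (M * s) := by
  have hs : 0 < s := ht.trans_le hts
  set c := ⨍ y in ball z s, u y with hc
  set Vt := (volume (ball z' t)).toReal with hVt
  set Vs := (volume (ball z s)).toReal with hVs
  have hVtpos : 0 < Vt := by rw [hVt, vol_ball z' ht]; exact mul_pos (pow_pos ht n) kpos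
  have hVspos : 0 < Vs := by rw [hVs, vol_ball z hs]; exact mul_pos (pow_pos hs n) kpos
  have hut : IntegrableOn u (ball z' t) := hu.mono_set hsub
  have hcint : IntegrableOn (fun _ => c) (ball z s) volume :=
    integrableOn_const measure_ball_lt_top.ne
  have hsubint : IntegrableOn (fun x => u x - c) (ball z s) volume := hu.sub hcint
  -- step 1
  have e1 : (⨍ y in ball z' t, u y) - c = ⨍ y in ball z' t, (u y - c) := by
    rw [setAverage_eq, setAverage_eq, integral_sub hut
        (integrableOn_const measure_ball_lt_top.ne), setIntegral_const]
    simp only [smul_eq_mul, smul_sub, measureReal_def, ← hVt]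
    field_simp
  -- step 2+3
  have e2 : |⨍ y in ball z' t, (u y - c)| ≤ Vt⁻¹ * ∫ y in ball z s, |u y - c| := by
    rw [setAverage_eq, measureReal_def, ← hVt, smul_eq_mul, abs_mul, abs_of_nonneg (inv_nonneg.2 hVtpos.le)]
    gcongr
    calc |∫ y in ball z' t, (u y - c)| ≤ ∫ y in ball z' t, |u y - c| := by
          simpa [Real.norm_eq_abs] using
            norm_integral_le_integral_norm (μ := volume.restrict (ball z' t))
              (fun y => u y - c)
      _ ≤ ∫ y in ball z s, |u y - c| := by
          apply setIntegral_mono_set hsubint.abs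
            (Filter.Eventually.of_forall fun x => abs_nonneg _) hsub.eventuallyLE
  -- step 4
  have e4 : ∫ y in ball z s, |u y - c| ≤ Vs * (M * s) := by
    have : (⨍ y in ball z s, |u y - c|) = Vs⁻¹ * ∫ y in ball z s, |u y - c| := by
      rw [setAverage_eq, measureReal_def, ← hVs, smul_eq_mul]
    have h2 := hP
    rw [this] at h2
    calc ∫ y in ball z s, |u y - c| = Vs * (Vs⁻¹ * ∫ y in ball z s, |u y - c|) := by
          field_simp
      _ ≤ Vs * (M * s) := by gcongr
  have ratio : Vt⁻¹ * Vs = (s / t) ^ n := by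
    have ht' : (t:ℝ) ≠ 0 := ht.ne'
    have hκ : (volume (ball (0:E) 1)).toReal ≠ 0 := kpos.ne'
    rw [hVt, hVs, vol_ball z' ht, vol_ball z hs, div_pow]
    field_simp
  calc |(⨍ y in ball z' t, u y) - c| = |⨍ y in ball z' t, (u y - c)| := by rw [e1]
    _ ≤ Vt⁻¹ * ∫ y in ball z s, |u y - c| := e2
    _ ≤ Vt⁻¹ * (Vs * (M * s)) := by gcongr
    _ = (s / t) ^ n * (M * s) := by rw [← ratio]; ring

lemma avg_diff_le {Ω : Set E} {u : E → ℝ} {M : ℝ} (hM : 0 ≤ M)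
    (hloc : LocallyIntegrableOn u Ω)
    (hP : ∀ z ρ, 0 < ρ → ball z (2*ρ) ⊆ Ω →
      ⨍ x in ball z ρ, |u x - ⨍ y in ball z ρ, u y| ≤ M * ρ)
    {x : E} {s₀ : ℝ} (hs₀ : 0 < s₀) (hΩs : ball x (2*s₀) ⊆ Ω) :
    ∀ s t : ℝ, 0 < t → t ≤ s → s ≤ s₀ →
      |(⨍ y in ball x t, u y) - ⨍ y in ball x s, u y| ≤ (2 ^ n * M * 2) * s := by
  have hI : ∀ {s : ℝ}, 0 < s → s ≤ s₀ → IntegrableOn u (ball x s) := by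
    intro s hs hss
    have h1 : closedBall x s ⊆ ball x (2*s₀) := closedBall_subset_ball (by linarith)
    exact (hloc.integrableOn_compact_subset (h1.trans hΩs)
      (isCompact_closedBall x s)).mono_set ball_subset_closedBall
  have hPs : ∀ {s : ℝ}, 0 < s → s ≤ s₀ →
      ⨍ w in ball x s, |u w - ⨍ y in ball x s, u y| ≤ M * s := by
    intro s hs hss
    exact hP x s hs ((ball_subset_ball (by linarith)).trans hΩs)
  have main : ∀ k : ℕ, ∀ s t : ℝ, 0 < t → t ≤ s → s ≤ s₀ → s * (1/2)^(k+1) < t →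
      |(⨍ y in ball x t, u y) - ⨍ y in ball x s, u y| ≤ 2^n * M * s * (2 - (1/2)^k) := by
    intro k
    induction k with
    | zero =>
      intro s t ht hts hss hlow
      have hs : 0 < s := ht.trans_le hts
      have base := avg_sub_avg ht hts (ball_subset_ball hts) (hI hs hss) (hPs hs hss)
      refine base.trans ?_
      have hMs : (0:ℝ) ≤ M * s := mul_nonneg hM hs.le
      have h1 : (s/t)^n ≤ 2^n := by
        apply pow_le_pow_left₀ (by positivity)
        rw [div_le_iff₀ ht]
        nlinarith
      calc (s/t)^n * (M*s) ≤ 2^n * (M*s) := by gcongr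
        _ = 2^n * M * s * (2 - (1/2:ℝ)^0) := by norm_num; ring
    | succ k ih =>
      intro s t ht hts hss hlow
      have hs : 0 < s := ht.trans_le hts
      have hMs : (0:ℝ) ≤ M * s := mul_nonneg hM hs.le
      by_cases hcase : s * (1/2) < t
      · have base := avg_sub_avg ht hts (ball_subset_ball hts) (hI hs hss) (hPs hs hss)
        refine base.trans ?_
        have h1 : (s/t)^n ≤ 2^n := by
          apply pow_le_pow_left₀ (by positivity)
          rw [div_le_iff₀ ht]
          nlinarith
        have h2 : (1/2:ℝ)^(k+1) ≤ 1 := pow_le_one₀ (by norm_num) (by norm_num)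
        calc (s/t)^n * (M*s) ≤ 2^n * (M*s) := by gcongr
          _ = 2^n * M * s * 1 := by ring
          _ ≤ 2^n * M * s * (2 - (1/2:ℝ)^(k+1)) := by
              have hA : (0:ℝ) ≤ 2^n * M * s := by positivity
              nlinarith
      · push_neg at hcase
        have ht2 : t ≤ s/2 := by linarith
        have hs2 : (0:ℝ) < s/2 := by linarith
        have hlow' : s/2 * (1/2)^(k+1) < t := by
          have heq : s/2 * (1/2:ℝ)^(k+1) = s * ((1/2)^(k+1) * (1/2)) := by ring
          rw [heq, ← pow_succ]
          exact hlow
        have h1 := ih (s/2) t ht ht2 (by linarith) hlow'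
        have h2 := avg_sub_avg hs2 (by linarith : s/2 ≤ s)
          (ball_subset_ball (by linarith)) (hI hs hss) (hPs hs hss)
        have hratio : s/(s/2) = 2 := by field_simp
        rw [hratio] at h2
        calc |(⨍ y in ball x t, u y) - ⨍ y in ball x s, u y|
            ≤ |(⨍ y in ball x t, u y) - ⨍ y in ball x (s/2), u y| +
              |(⨍ y in ball x (s/2), u y) - ⨍ y in ball x s, u y| := abs_sub_le _ _ _
          _ ≤ 2^n * M * (s/2) * (2 - (1/2)^k) + 2^n * (M*s) := add_le_add h1 h2
          _ = 2^n * M * s * (2 - (1/2:ℝ)^(k+1)) := by rw [pow_succ]; ring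
  intro s t ht hts hss
  have hs : 0 < s := ht.trans_le hts
  obtain ⟨k, hk⟩ : ∃ k : ℕ, s * (1/2)^(k+1) < t := by
    obtain ⟨k, hk⟩ := exists_pow_lt_of_lt_one (div_pos ht hs) (by norm_num : (1/2:ℝ) < 1)
    refine ⟨k, ?_⟩
    rw [lt_div_iff₀ hs] at hk
    calc s * (1/2:ℝ)^(k+1) ≤ s * (1/2)^k :=
          mul_le_mul_of_nonneg_left
            (pow_le_pow_of_le_one (by norm_num) (by norm_num) (Nat.le_succ k)) hs.le
      _ < t := by nlinarith
  have := main k s t ht hts hss hk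
  refine this.trans ?_
  have hA : (0:ℝ) ≤ 2^n * M * s := by positivity
  have h2 : (2:ℝ) - (1/2)^k ≤ 2 := by
    have : (0:ℝ) ≤ (1/2:ℝ)^k := by positivity
    linarith
  nlinarith

lemma exists_tendsto {x : E} {s₀ : ℝ} (hs₀ : 0 < s₀) {u : E → ℝ} {A : ℝ} (hA : 0 ≤ A)
    (hB : ∀ s t : ℝ, 0 < t → t ≤ s → s ≤ s₀ →
      |(⨍ y in ball x t, u y) - ⨍ y in ball x s, u y| ≤ A * s) :
    ∃ L, Tendsto (fun ρ => ⨍ y in ball x ρ, u y) (𝓝[>] (0:ℝ)) (𝓝 L) ∧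
      ∀ s, 0 < s → s ≤ s₀ → |L - ⨍ y in ball x s, u y| ≤ A * s := by
  set F : ℝ → ℝ := fun ρ => ⨍ y in ball x ρ, u y with hF
  have hsj : ∀ j : ℕ, 0 < s₀ * (1/2)^j ∧ s₀ * (1/2)^j ≤ s₀ := by
    intro j
    constructor
    · positivity
    · calc s₀ * (1/2:ℝ)^j ≤ s₀ * 1 :=
          mul_le_mul_of_nonneg_left (pow_le_one₀ (by norm_num) (by norm_num)) hs₀.le
        _ = s₀ := mul_one _
  have hcauchy : CauchySeq (fun j : ℕ => F (s₀ * (1/2)^j)) := by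
    apply cauchySeq_of_le_geometric (1/2) (A * s₀) (by norm_num)
    intro j
    rw [Real.dist_eq, abs_sub_comm]
    have h1 : s₀ * (1/2:ℝ)^(j+1) ≤ s₀ * (1/2)^j :=
      mul_le_mul_of_nonneg_left
        (pow_le_pow_of_le_one (by norm_num) (by norm_num) (Nat.le_succ j)) hs₀.le
    have := hB (s₀ * (1/2)^j) (s₀ * (1/2)^(j+1)) (hsj (j+1)).1 h1 (hsj j).2
    calc |F (s₀ * (1/2)^(j+1)) - F (s₀ * (1/2)^j)| ≤ A * (s₀ * (1/2)^j) := this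
      _ = A * s₀ * (1/2)^j := by ring
  obtain ⟨L, hL⟩ := cauchySeq_tendsto_of_complete hcauchy
  have hLs : ∀ s, 0 < s → s ≤ s₀ → |L - F s| ≤ A * s := by
    intro s hs hss
    have htend : Tendsto (fun j : ℕ => s₀ * (1/2:ℝ)^j) atTop (𝓝 0) := by
      have := tendsto_pow_atTop_nhds_zero_of_lt_one (by norm_num : (0:ℝ) ≤ 1/2)
        (by norm_num : (1/2:ℝ) < 1)
      simpa using this.const_mul s₀
    have hev : ∀ᶠ j : ℕ in atTop, |F (s₀ * (1/2)^j) - F s| ≤ A * s := by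
      filter_upwards [htend.eventually_lt_const hs] with j hj
      exact hB s (s₀ * (1/2)^j) (hsj j).1 hj.le hss
    have habs : Tendsto (fun j : ℕ => |F (s₀ * (1/2)^j) - F s|) atTop (𝓝 |L - F s|) :=
      ((hL.sub tendsto_const_nhds).abs)
    exact le_of_tendsto habs hev
  refine ⟨L, ?_, hLs⟩
  rw [Metric.tendsto_nhdsWithin_nhds]
  intro ε hε
  set δ : ℝ := min s₀ (ε / (2*A+1)) with hδ
  have hδpos : 0 < δ := lt_min hs₀ (by positivity)
  have hδs₀ : δ ≤ s₀ := min_le_left _ _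
  have hδε : 2 * A * δ < ε := by
    have h1 : δ ≤ ε / (2*A+1) := min_le_right _ _
    have h2 : 2 * A * δ ≤ 2 * A * (ε / (2*A+1)) := by
      apply mul_le_mul_of_nonneg_left h1 (by positivity)
    have h3 : 2 * A * (ε / (2*A+1)) < ε := by
      rw [mul_div_assoc']
      rw [div_lt_iff₀ (by positivity)]
      nlinarith
    linarith
  refine ⟨δ, hδpos, ?_⟩
  intro ρ hρ hρδ
  rw [Real.dist_eq, sub_zero] at hρδ
  rw [mem_Ioi] at hρ
  rw [abs_of_pos hρ] at hρδ
  have h1 : |F ρ - F δ| ≤ A * δ := hB δ ρ hρ hρδ.le hδs₀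
  have h2 : |L - F δ| ≤ A * δ := hLs δ hδpos hδs₀
  rw [Real.dist_eq]
  calc |F ρ - L| ≤ |F ρ - F δ| + |F δ - L| := abs_sub_le _ _ _
    _ = |F ρ - F δ| + |L - F δ| := by rw [abs_sub_comm (F δ) L]
    _ ≤ A * δ + A * δ := add_le_add h1 h2
    _ = 2 * A * δ := by ring
    _ < ε := hδε

lemma avg_closedBall_eq {x : E} {ρ : ℝ} (hρ : 0 < ρ) (u : E → ℝ) :
    (⨍ y in closedBall x ρ, u y) = ⨍ y in ball x ρ, u y := by
  have hae : closedBall x ρ =ᵐ[(volume : Measure E)] ball x ρ := by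
    rw [MeasureTheory.ae_eq_set]
    constructor
    · apply measure_mono_null _ (Measure.addHaar_sphere_of_ne_zero volume x hρ.ne')
      intro y hy
      have h1 : dist y x ≤ ρ := mem_closedBall.1 hy.1
      have h2 : ¬ dist y x < ρ := fun h => hy.2 (mem_ball.2 h)
      exact mem_sphere.2 (le_antisymm h1 (not_lt.1 h2))
    · have : ball x ρ \ closedBall x ρ = ∅ := diff_eq_empty.2 ball_subset_closedBall
      rw [this]; exact measure_empty
  rw [setAverage_eq, setAverage_eq, measureReal_def, measureReal_def, measure_congr hae, setIntegral_congr_set hae]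

end PoincareLip

open PoincareLip

/-- The chain-of-balls argument at the end of the proof of Theorem 1.2: if a locally
integrable `u` on an open `Ω ⊆ ℝⁿ` satisfies the linear Poincaré-type bound
`⨍_{B(z,ρ)} |u − u_{B(z,ρ)}| ≤ M ρ` on every ball with `B(z,2ρ) ⊆ Ω`, then `u` has a
representative `v` with `|v(x) − v(y)| ≤ C M ‖x − y‖` on `B(y₀,r)` whenever
`B(y₀,6r) ⊆ Ω`, where `C` depends only on `n`. -/
theorem poincare_bound_implies_lipschitz_representative (n : ℕ) (hn : 1 ≤ n) :
    ∃ C : ℝ, 0 < C ∧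
      ∀ (Ω : Set (EuclideanSpace ℝ (Fin n))), IsOpen Ω →
      ∀ u : EuclideanSpace ℝ (Fin n) → ℝ, LocallyIntegrableOn u Ω →
      ∀ M : ℝ, 0 ≤ M →
      (∀ (z : EuclideanSpace ℝ (Fin n)) (ρ : ℝ), 0 < ρ → ball z (2 * ρ) ⊆ Ω →
        ⨍ x in ball z ρ, |u x - ⨍ y in ball z ρ, u y| ≤ M * ρ) →
      ∃ v : EuclideanSpace ℝ (Fin n) → ℝ,
        (∀ᵐ x ∂(volume.restrict Ω), u x = v x) ∧
        ∀ (y₀ : EuclideanSpace ℝ (Fin n)) (r : ℝ), ball y₀ (6 * r) ⊆ Ω →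
          ∀ x ∈ ball y₀ r, ∀ y ∈ ball y₀ r, |v x - v y| ≤ C * M * ‖x - y‖ := by
  refine ⟨4 * 2^n, by positivity, ?_⟩
  intro Ω hΩ u hloc M hM hP
  set v : EuclideanSpace ℝ (Fin n) → ℝ :=
    fun w => limUnder (𝓝[>] (0:ℝ)) (fun ρ => ⨍ y in ball w ρ, u y) with hv
  refine ⟨v, ?_, ?_⟩
  · -- a.e. equality
    obtain ⟨D, hDc, hDd⟩ := TopologicalSpace.exists_countable_dense (EuclideanSpace ℝ (Fin n))
    set S : Set (EuclideanSpace ℝ (Fin n) × ℚ) :=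
      {p | p.1 ∈ D ∧ 0 < ((p.2:ℝ)) ∧ closedBall p.1 (2*(p.2:ℝ)) ⊆ Ω} with hS
    have hScount : S.Countable := by
      apply Set.Countable.mono _ (hDc.prod (Set.countable_univ (α := ℚ)))
      intro p hp
      exact ⟨hp.1, mem_univ _⟩
    have hLeb : ∀ p ∈ S, ∀ᵐ x : EuclideanSpace ℝ (Fin n),
        x ∈ ball p.1 (p.2:ℝ) → u x = v x := by
      rintro ⟨q, rq⟩ ⟨hq, hrq, hsubΩ⟩
      set r : ℝ := (rq:ℝ) with hr
      set g : EuclideanSpace ℝ (Fin n) → ℝ := (ball q ((3/2)*r)).indicator u with hg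
      have hgi : Integrable g := by
        rw [hg, integrable_indicator_iff measurableSet_ball]
        apply (hloc.integrableOn_compact_subset ((closedBall_subset_closedBall
          (by linarith)).trans hsubΩ) (isCompact_closedBall q ((3/2)*r))).mono_set
          ball_subset_closedBall
      have hbes := IsUnifLocDoublingMeasure.ae_tendsto_average
        (μ := (volume : Measure (EuclideanSpace ℝ (Fin n)))) hgi.locallyIntegrable 1
      filter_upwards [hbes] with x hx hxball
      have hxq : dist x q < r := mem_ball.1 hxball
      have h1 : Tendsto (fun ρ : ℝ => ⨍ y in closedBall x ρ, g y) (𝓝[>] (0:ℝ))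
          (𝓝 (g x)) := by
        apply hx (fun _ => x) id tendsto_id
        filter_upwards [self_mem_nhdsWithin] with ρ hρ
        rw [mem_Ioi] at hρ
        exact mem_closedBall_self (by simpa using hρ.le)
      have hgx : g x = u x := by
        rw [hg]
        exact indicator_of_mem (mem_ball.2 (by linarith)) u
      rw [hgx] at h1
      have hcongr : (fun ρ : ℝ => ⨍ y in closedBall x ρ, g y) =ᶠ[𝓝[>] (0:ℝ)]
          (fun ρ => ⨍ y in ball x ρ, u y) := by
        have hev : ∀ᶠ ρ in 𝓝[>] (0:ℝ), ρ ∈ Ioo (0:ℝ) ((r - dist x q)/2) := by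
          apply Ioo_mem_nhdsGT_of_mem
          constructor
          · rfl
          · linarith
        filter_upwards [hev] with ρ hρ
        have hsub : closedBall x ρ ⊆ ball q ((3/2)*r) := by
          intro y hy
          have := mem_closedBall.1 hy
          have h3 : dist y q ≤ dist y x + dist x q := dist_triangle _ _ _
          rw [mem_ball]
          have hρ2 := hρ.2
          linarith
        have heq : ∀ y ∈ closedBall x ρ, g y = u y := fun y hy => by
          rw [hg]; exact indicator_of_mem (hsub hy) u
        rw [setAverage_eq, setIntegral_congr_fun measurableSet_closedBall heq,
          ← setAverage_eq, avg_closedBall_eq hρ.1]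
      have h2 : Tendsto (fun ρ : ℝ => ⨍ y in ball x ρ, u y) (𝓝[>] (0:ℝ)) (𝓝 (u x)) :=
        h1.congr' hcongr
      exact (h2.limUnder_eq).symm
    have hae2 : ∀ᵐ x : EuclideanSpace ℝ (Fin n),
        ∀ p ∈ S, x ∈ ball p.1 (p.2:ℝ) → u x = v x := (ae_ball_iff hScount).2 hLeb
    have hcover : ∀ x ∈ Ω, ∃ p ∈ S, x ∈ ball p.1 (p.2:ℝ) := by
      intro x hx
      obtain ⟨ε, hε, hball⟩ := Metric.isOpen_iff.1 hΩ x hx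
      obtain ⟨q, hq, hqd⟩ := hDd.exists_dist_lt x (by positivity : (0:ℝ) < ε/8)
      obtain ⟨rq, hrq1, hrq2⟩ := exists_rat_btwn (by linarith : (ε/8:ℝ) < ε/4)
      refine ⟨(q, rq), ⟨hq, by linarith, ?_⟩, ?_⟩
      · intro z hz
        apply hball
        rw [mem_ball]
        have h1 : dist z q ≤ 2*(rq:ℝ) := mem_closedBall.1 hz
        have h2 : dist z x ≤ dist z q + dist q x := dist_triangle _ _ _
        rw [dist_comm q x] at h2
        linarith
      · rw [mem_ball]
        have : dist x q < ε/8 := hqd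
        linarith
    have h1 : ∀ᵐ x ∂(volume.restrict Ω), ∀ p ∈ S, x ∈ ball p.1 (p.2:ℝ) → u x = v x :=
      ae_restrict_of_ae hae2
    have h2 : ∀ᵐ x ∂(volume.restrict Ω), x ∈ Ω := ae_restrict_mem hΩ.measurableSet
    filter_upwards [h1, h2] with x hx1 hx2
    obtain ⟨p, hp, hxp⟩ := hcover x hx2
    exact hx1 p hp hxp
  · -- Lipschitz estimate
    intro y₀ r h6 x hx y hy
    by_cases hxy : x = y
    · subst hxy; simp
    have hr : 0 < r := dist_nonneg.trans_lt (mem_ball.1 hx)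
    set d := dist x y with hd
    have hdpos : 0 < d := dist_pos.2 hxy
    have hxy₀ : dist x y₀ < r := mem_ball.1 hx
    have hyy₀ : dist y y₀ < r := mem_ball.1 hy
    have hd2r : d < 2*r := by
      calc d ≤ dist x y₀ + dist y₀ y := dist_triangle _ _ _
        _ = dist x y₀ + dist y y₀ := by rw [dist_comm y₀ y]
        _ < 2*r := by linarith
    set m := midpoint ℝ x y with hm
    have hdxm : dist x m = d/2 := by
      rw [hm, dist_left_midpoint, Real.norm_two]
      ring
    have hdym : dist y m = d/2 := by
      rw [hm, dist_right_midpoint, Real.norm_two]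
      ring
    have hmy₀ : dist m y₀ < r := by
      have h := dist_midpoint_midpoint_le x y y₀ y₀
      rw [midpoint_self] at h
      calc dist m y₀ ≤ (dist x y₀ + dist y y₀)/2 := h
        _ < r := by linarith
    -- middle ball estimates
    have hm6 : closedBall m d ⊆ Ω := by
      intro z hz
      apply h6
      rw [mem_ball]
      have h1 : dist z m ≤ d := mem_closedBall.1 hz
      have h2 : dist z y₀ ≤ dist z m + dist m y₀ := dist_triangle _ _ _
      linarith
    have hum : IntegrableOn u (ball m d) :=
      (hloc.integrableOn_compact_subset hm6 (isCompact_closedBall m d)).mono_set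
        ball_subset_closedBall
    have hPm : ⨍ w in ball m d, |u w - ⨍ y' in ball m d, u y'| ≤ M * d := by
      apply hP m d hdpos
      intro z hz
      apply h6
      rw [mem_ball]
      have h1 : dist z m < 2*d := mem_ball.1 hz
      have h2 : dist z y₀ ≤ dist z m + dist m y₀ := dist_triangle _ _ _
      linarith
    have hd22 : d/(d/2) = 2 := by field_simp
    have hmid1 : |(⨍ y' in ball x (d/2), u y') - ⨍ y' in ball m d, u y'| ≤ 2^n * (M*d) := by
      have h := avg_sub_avg (half_pos hdpos) (by linarith : d/2 ≤ d)
        (ball_subset_ball' (by rw [hdxm]; linarith)) hum hPm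
      rwa [hd22] at h
    have hmid2 : |(⨍ y' in ball y (d/2), u y') - ⨍ y' in ball m d, u y'| ≤ 2^n * (M*d) := by
      have h := avg_sub_avg (half_pos hdpos) (by linarith : d/2 ≤ d)
        (ball_subset_ball' (by rw [hdym]; linarith)) hum hPm
      rwa [hd22] at h
    -- limits at x and y
    have hball4 : ∀ w : EuclideanSpace ℝ (Fin n), dist w y₀ < r →
        ball w (2*(2*r)) ⊆ Ω := by
      intro w hw
      refine (ball_subset_ball' ?_).trans h6
      linarith
    have hBx := avg_diff_le hM hloc hP (by positivity : (0:ℝ) < 2*r) (hball4 x hxy₀)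
    have hBy := avg_diff_le hM hloc hP (by positivity : (0:ℝ) < 2*r) (hball4 y hyy₀)
    obtain ⟨Lx, hLxt, hLxq⟩ := exists_tendsto (by positivity : (0:ℝ) < 2*r)
      (by positivity : (0:ℝ) ≤ 2^n*M*2) hBx
    obtain ⟨Ly, hLyt, hLyq⟩ := exists_tendsto (by positivity : (0:ℝ) < 2*r)
      (by positivity : (0:ℝ) ≤ 2^n*M*2) hBy
    have hvx : v x = Lx := hLxt.limUnder_eq
    have hvy : v y = Ly := hLyt.limUnder_eq
    have hbx : |v x - ⨍ y' in ball x (d/2), u y'| ≤ 2^n * (M*d) := by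
      rw [hvx]
      have h := hLxq (d/2) (half_pos hdpos) (by linarith)
      refine h.trans (le_of_eq (by ring))
    have hby : |v y - ⨍ y' in ball y (d/2), u y'| ≤ 2^n * (M*d) := by
      rw [hvy]
      have h := hLyq (d/2) (half_pos hdpos) (by linarith)
      refine h.trans (le_of_eq (by ring))
    have hnorm : ‖x - y‖ = d := by rw [hd, dist_eq_norm]
    set Fx := ⨍ y' in ball x (d/2), u y' with hFx
    set Fy := ⨍ y' in ball y (d/2), u y' with hFy
    set Fm := ⨍ y' in ball m d, u y' with hFm
    calc |v x - v y|
        ≤ |v x - Fx| + |Fx - v y| := abs_sub_le _ _ _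
      _ ≤ |v x - Fx| + (|Fx - Fm| + |Fm - v y|) :=
          add_le_add (le_refl _) (abs_sub_le _ _ _)
      _ ≤ |v x - Fx| + (|Fx - Fm| + (|Fm - Fy| + |Fy - v y|)) := by
          gcongr
          exact abs_sub_le _ _ _
      _ ≤ 2^n * (M*d) + (2^n * (M*d) + (2^n * (M*d) + 2^n * (M*d))) :=
          add_le_add hbx (add_le_add hmid1 (add_le_add
            (by rw [abs_sub_comm]; exact hmid2) (by rw [abs_sub_comm]; exact hby)))
      _ = 4 * 2^n * M * ‖x - y‖ := by rw [hnorm]; ring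
end
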